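/- arXiv:math/0410496 — 2 statements merged into one kernel-verified Lean document; each statement's English description precedes it below -/
import Mathlib

section
/- Let f : [0,∞) → ℝ be continuous and integrable on (0,∞), and suppose f is (k+1)-times continuously differentiable on a neighborhood of 0, where k ≥ 0 is an integer. Then the limit, as real q → k with q ∈ (k, k+1), of (1/Γ(−q)) ∫₀^∞ t^{−1−q}( f(t) − Σ_{j=0}^{k} (t^j/j!) f^{(j)}(0) ) dt exists and equals (−1)^k f^{(k)}(0). -/
open MeasureTheory Filter Set

private lemma gamma_prod (n : ℕ) (x : ℝ) (hx : ∀ i : ℕ, i < n → x + i ≠ 0) :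
    Real.Gamma (x + n) = (∏ i ∈ Finset.range n, (x + i)) * Real.Gamma x := by
  induction n with
  | zero => simp
  | succ n ih =>
    have h1 : x + (n + 1 : ℕ) = (x + n) + 1 := by push_cast; ring
    rw [h1, Real.Gamma_add_one (hx n (Nat.lt_succ_self n)),
      ih (fun i hi => hx i (hi.trans (Nat.lt_succ_self n))), Finset.prod_range_succ]
    ring

private lemma prod_range_cast_sub (k : ℕ) :
    (∏ i ∈ Finset.range k, ((i : ℝ) - k)) = (-1 : ℝ) ^ k * (Nat.factorial k) := by
  have h1 : ∀ i ∈ Finset.range k, ((i : ℝ) - k) = -(((k - 1 - i : ℕ) : ℝ) + 1) := by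
    intro i hi
    rw [Finset.mem_range] at hi
    have : (k - 1 - i : ℕ) = k - 1 - i := rfl
    have hk : 1 ≤ k := Nat.one_le_of_lt (Nat.lt_of_le_of_lt (Nat.zero_le i) hi)
    have : ((k - 1 - i : ℕ) : ℝ) = (k : ℝ) - 1 - i := by
      push_cast [Nat.cast_sub (by omega : i ≤ k - 1), Nat.cast_sub (by omega : 1 ≤ k)]
      ring
    rw [this]; ring
  rw [Finset.prod_congr rfl h1]
  have h3 : ∀ i ∈ Finset.range k, -(((k - 1 - i : ℕ) : ℝ) + 1)
      = (-1) * (((k - 1 - i : ℕ) : ℝ) + 1) := fun i _ => by ring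
  rw [Finset.prod_congr rfl h3, Finset.prod_mul_distrib, Finset.prod_const, Finset.card_range]
  have h2 : (∏ i ∈ Finset.range k, (((k - 1 - i : ℕ) : ℝ) + 1))
      = ∏ i ∈ Finset.range k, ((i : ℝ) + 1) := by
    have := Finset.prod_range_reflect (fun i => ((i : ℝ) + 1)) k
    simpa using this
  rw [h2]
  congr 1
  have h4 : (∏ i ∈ Finset.range k, ((i : ℝ) + 1))
      = ((∏ i ∈ Finset.range k, (i + 1) : ℕ) : ℝ) := by push_cast; rfl
  rw [h4, Finset.prod_range_add_one_eq_factorial]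

private lemma taylor_bound (k : ℕ) (f : ℝ → ℝ) {ε : ℝ} (hε : 0 < ε)
    (hf : ContDiffOn ℝ (k + 1) f (Set.Ioo (-ε) ε)) :
    ∃ δ C : ℝ, 0 < δ ∧ δ ≤ 1 ∧ 0 ≤ C ∧ ∀ t ∈ Icc (0:ℝ) δ,
      |f t - ∑ j ∈ Finset.range (k + 1), iteratedDeriv j f 0 / (Nat.factorial j) * t ^ j|
        ≤ C * t ^ (k + 1) := by
  set δ := min (ε / 2) 1 with hδdef
  have hδ0 : 0 < δ := lt_min (by linarith) one_pos
  have hδ1 : δ ≤ 1 := min_le_right _ _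
  have hsub : Icc (0:ℝ) δ ⊆ Ioo (-ε) ε := by
    intro t ht
    refine ⟨by linarith [ht.1], ?_⟩
    have h2 : t ≤ ε / 2 := le_trans ht.2 (min_le_left _ _)
    linarith
  have h0mem : (0:ℝ) ∈ Icc (0:ℝ) δ := ⟨le_refl _, hδ0.le⟩
  have hf' : ContDiffOn ℝ (k + 1) f (Icc (0:ℝ) δ) := hf.mono hsub
  obtain ⟨C, hC⟩ := exists_taylor_mean_remainder_bound hδ0.le hf'
  have hud : UniqueDiffOn ℝ (Icc (0:ℝ) δ) := uniqueDiffOn_Icc hδ0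
  have hDW : ∀ j, j ≤ k → iteratedDerivWithin j f (Icc (0:ℝ) δ) 0 = iteratedDeriv j f 0 := by
    intro j hj
    have hTs : HasFTaylorSeriesUpToOn ((k:ℕ∞) + 1) f
        (ftaylorSeriesWithin ℝ f (Ioo (-ε) ε)) (Ioo (-ε) ε) :=
      hf.ftaylorSeriesWithin (isOpen_Ioo.uniqueDiffOn)
    have hTs' := hTs.mono hsub
    have heq := hTs'.eq_iteratedFDerivWithin_of_uniqueDiffOn
      (m := j) (by exact_mod_cast le_trans (Nat.cast_le.2 hj) (by norm_cast; omega)) hud h0mem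
    rw [iteratedDerivWithin_eq_iteratedFDerivWithin, iteratedDeriv_eq_iteratedFDeriv, ← heq]
    have h0' : (0:ℝ) ∈ Ioo (-ε) ε := hsub h0mem
    simp only [ftaylorSeriesWithin, iteratedFDerivWithin_of_isOpen j isOpen_Ioo h0']
  refine ⟨δ, max C 0, hδ0, hδ1, le_max_right _ _, ?_⟩
  intro t ht
  have h1 := hC t ht
  rw [taylor_within_apply] at h1
  have h2 : (∑ j ∈ Finset.range (k + 1),
        (((Nat.factorial j : ℝ))⁻¹ * (t - 0) ^ j) • iteratedDerivWithin j f (Icc (0:ℝ) δ) 0)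
      = ∑ j ∈ Finset.range (k + 1),
        iteratedDeriv j f 0 / (Nat.factorial j) * t ^ j := by
    refine Finset.sum_congr rfl fun j hj => ?_
    rw [hDW j (Nat.lt_succ_iff.1 (Finset.mem_range.1 hj))]
    simp only [smul_eq_mul, sub_zero]
    ring
  rw [h2] at h1
  rw [Real.norm_eq_abs, sub_zero] at h1
  refine h1.trans ?_
  exact mul_le_mul_of_nonneg_right (le_max_left _ _) (pow_nonneg ht.1 _)

/-- Fractional derivatives of integer order recover the ordinary derivatives up to sign:
if `f` is continuous on `[0,∞)`, integrable on `(0,∞)`, and `(k+1)`-times continuously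
differentiable near `0`, then
`(1/Γ(-q)) ∫₀^∞ t^{-1-q}(f(t) - Σ_{j=0}^{k} (t^j/j!) f^{(j)}(0)) dt → (-1)^k f^{(k)}(0)`
as `q → k`, `q ∈ (k, k+1)`. -/
theorem fracDeriv_tendsto_integer_order
    (k : ℕ) (f : ℝ → ℝ)
    (hcont : ContinuousOn f (Set.Ici (0 : ℝ)))
    (hint : IntegrableOn f (Set.Ioi (0 : ℝ)) volume)
    (hsmooth : ∃ ε > (0 : ℝ), ContDiffOn ℝ (k + 1) f (Set.Ioo (-ε) ε)) :
    Tendsto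
      (fun q : ℝ => (1 / Real.Gamma (-q)) *
        ∫ t in Set.Ioi (0 : ℝ), t ^ (-1 - q) *
          (f t - ∑ j ∈ Finset.range (k + 1),
            t ^ j / (Nat.factorial j) * iteratedDeriv j f 0))
      (nhdsWithin (k : ℝ) (Set.Ioo (k : ℝ) ((k : ℝ) + 1)))
      (nhds ((-1 : ℝ) ^ k * iteratedDeriv k f 0)) := by
  obtain ⟨ε, hε, hsm⟩ := hsmooth
  obtain ⟨δ, C, hδ0, hδ1, hC0, hTay0⟩ := taylor_bound k f hε hsm
  set a : ℕ → ℝ := fun j => iteratedDeriv j f 0 / (Nat.factorial j) with ha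
  set S : ℝ → ℝ := fun t => ∑ j ∈ Finset.range (k + 1), a j * t ^ j with hS
  set R : ℝ → ℝ := fun t => f t - S t with hR
  set l := nhdsWithin (k : ℝ) (Set.Ioo (k : ℝ) ((k : ℝ) + 1)) with hl
  set P : ℝ → ℝ := fun q => ∏ i ∈ Finset.range (k + 1), ((i : ℝ) - q) with hP
  set Q : ℕ → ℝ → ℝ := fun j q => ∏ i ∈ (Finset.range (k + 1)).erase j, ((i : ℝ) - q) with hQ
  set A : ℝ → ℝ := fun q => ∫ t in Ioc (0:ℝ) 1, t ^ (-1 - q) * R t with hA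
  set B : ℝ → ℝ := fun q => ∫ t in Ioi (1:ℝ), t ^ (-1 - q) * f t with hB
  -- Taylor bound in terms of R
  have hTay : ∀ t ∈ Icc (0:ℝ) δ, |R t| ≤ C * t ^ (k + 1) := by
    intro t ht
    exact hTay0 t ht
  -- bound of R on [0,1]
  have hRcont : ContinuousOn R (Icc (0:ℝ) 1) := by
    apply ContinuousOn.sub (hcont.mono (fun t ht => ht.1))
    exact (continuous_finset_sum _ fun j _ => continuous_const.mul (continuous_pow j)).continuousOn
  obtain ⟨M, hM0, hMb⟩ : ∃ M, 0 ≤ M ∧ ∀ t ∈ Icc (0:ℝ) 1, |R t| ≤ M := by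
    obtain ⟨M, hM⟩ := isCompact_Icc.exists_bound_of_continuousOn hRcont
    exact ⟨max M 0, le_max_right _ _, fun t ht => le_trans (hM t ht) (le_max_left _ _)⟩
  -- eventually q ∈ Ioo k (k + 1/2)
  have hev : ∀ᶠ q in l, q ∈ Ioo (k : ℝ) ((k : ℝ) + 1/2) := by
    have h1 : ∀ᶠ q in l, q ∈ Ioo (k : ℝ) ((k : ℝ) + 1) := eventually_mem_nhdsWithin
    have h2 : ∀ᶠ q in l, q < (k : ℝ) + 1/2 := by
      apply Filter.Eventually.filter_mono nhdsWithin_le_nhds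
      exact Filter.Tendsto.eventually_lt_const (by linarith) tendsto_id
    filter_upwards [h1, h2] with q hq1 hq2 using ⟨hq1.1, hq2⟩
  -- measurability on Ioc 0 1
  have hmeasIoc : ∀ q : ℝ, AEStronglyMeasurable (fun t => t ^ (-1 - q) * R t)
      (volume.restrict (Ioc (0:ℝ) 1)) := by
    intro q
    refine ContinuousOn.aestronglyMeasurable ?_ measurableSet_Ioc
    refine ContinuousOn.mul (fun t ht => ?_) (hRcont.mono Ioc_subset_Icc_self)
    exact (Real.continuousAt_rpow_const t _ (Or.inl (ne_of_gt ht.1))).continuousWithinAt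
  -- dominating function on Ioc 0 1
  set g : ℝ → ℝ := fun t => C * t ^ (-(1:ℝ)/2) + M * δ ^ (-(k:ℝ) - 2) with hg
  have hg_int : IntegrableOn g (Ioc (0:ℝ) 1) := by
    apply Integrable.add
    · exact ((intervalIntegral.intervalIntegrable_rpow' (by norm_num)).1).const_mul C
    · exact integrableOn_const measure_Ioc_lt_top.ne
  -- uniform bound on Ioc 0 1
  have hbound : ∀ q ∈ Ioo (k : ℝ) ((k : ℝ) + 1/2), ∀ t ∈ Ioc (0:ℝ) 1,
      ‖t ^ (-1 - q) * R t‖ ≤ g t := by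
    intro q hq t ht
    have ht0 : 0 < t := ht.1
    have ht1 : t ≤ 1 := ht.2
    have hqk : (k : ℝ) < q := hq.1
    have hq2 : q < (k : ℝ) + 1/2 := hq.2
    rw [norm_mul, Real.norm_eq_abs, Real.norm_eq_abs,
      abs_of_nonneg (Real.rpow_nonneg ht0.le _)]
    rcases le_or_gt t δ with hcase | hcase
    · have h1 : |R t| ≤ C * t ^ (k + 1) := hTay t ⟨ht0.le, hcase⟩
      have h2 : t ^ (-1 - q) * |R t| ≤ C * t ^ ((k : ℝ) - q) := by
        have hmul := mul_le_mul_of_nonneg_left h1 (Real.rpow_nonneg ht0.le (-1 - q))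
        refine hmul.trans_eq ?_
        rw [← Real.rpow_natCast t (k + 1), mul_left_comm, ← Real.rpow_add ht0]
        congr 2
        push_cast
        ring
      refine h2.trans ?_
      have h3 : t ^ ((k : ℝ) - q) ≤ t ^ (-(1:ℝ)/2) :=
        Real.rpow_le_rpow_of_exponent_ge ht0 ht1 (by linarith)
      have h4 : 0 ≤ M * δ ^ (-(k:ℝ) - 2) :=
        mul_nonneg hM0 (Real.rpow_nonneg hδ0.le _)
      simp only [hg]
      nlinarith [Real.rpow_nonneg ht0.le (-(1:ℝ)/2)]
    · have h1 : |R t| ≤ M := hMb t ⟨ht0.le, ht1⟩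
      have h2 : t ^ (-1 - q) ≤ δ ^ (-(k:ℝ) - 2) := by
        calc t ^ (-1 - q) ≤ δ ^ (-1 - q) :=
              Real.rpow_le_rpow_of_nonpos hδ0 hcase.le (by linarith [Nat.cast_nonneg (α := ℝ) k])
          _ ≤ δ ^ (-(k:ℝ) - 2) :=
              Real.rpow_le_rpow_of_exponent_ge hδ0 hδ1 (by linarith)
      have h5 : t ^ (-1 - q) * |R t| ≤ M * δ ^ (-(k:ℝ) - 2) := by
        calc t ^ (-1 - q) * |R t| ≤ δ ^ (-(k:ℝ) - 2) * M :=
              mul_le_mul h2 h1 (abs_nonneg _) (Real.rpow_nonneg hδ0.le _)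
          _ = M * δ ^ (-(k:ℝ) - 2) := mul_comm _ _
      refine h5.trans ?_
      simp only [hg]
      nlinarith [Real.rpow_nonneg ht0.le (-(1:ℝ)/2), hC0]
  -- integrability on Ioc 0 1
  have hA_int : ∀ q ∈ Ioo (k : ℝ) ((k : ℝ) + 1/2),
      IntegrableOn (fun t => t ^ (-1 - q) * R t) (Ioc (0:ℝ) 1) := by
    intro q hq
    refine Integrable.mono' hg_int (hmeasIoc q) ?_
    rw [ae_restrict_iff' measurableSet_Ioc]
    exact ae_of_all _ (hbound q hq)
  -- A tendsto
  have hA_tendsto : Tendsto A l (nhds (A k)) := by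
    apply tendsto_integral_filter_of_dominated_convergence g
      (Eventually.of_forall hmeasIoc)
    · filter_upwards [hev] with q hq
      rw [ae_restrict_iff' measurableSet_Ioc]
      exact ae_of_all _ (hbound q hq)
    · exact hg_int
    · rw [ae_restrict_iff' measurableSet_Ioc]
      refine ae_of_all _ fun t ht => ?_
      apply Tendsto.mul_const
      have hc : ContinuousAt (fun q : ℝ => t ^ (-1 - q)) (k : ℝ) := by
        exact (Real.continuousAt_const_rpow (ne_of_gt ht.1)).comp
          ((continuous_const.sub continuous_id).continuousAt)
      exact hc.tendsto.mono_left nhdsWithin_le_nhds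
  -- B part
  have hfIoi1 : IntegrableOn f (Ioi (1:ℝ)) volume := hint.mono (Ioi_subset_Ioi zero_le_one) le_rfl
  have hmeasB : ∀ q : ℝ, AEStronglyMeasurable (fun t => t ^ (-1 - q) * f t)
      (volume.restrict (Ioi (1:ℝ))) := by
    intro q
    refine AEStronglyMeasurable.mul ?_ hfIoi1.aestronglyMeasurable
    refine ContinuousOn.aestronglyMeasurable (fun t ht => ?_) measurableSet_Ioi
    exact (Real.continuousAt_rpow_const t _ (Or.inl (ne_of_gt (lt_trans zero_lt_one ht)))).continuousWithinAt
  have hboundB : ∀ q ∈ Ioo (k : ℝ) ((k : ℝ) + 1/2), ∀ t ∈ Ioi (1:ℝ),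
      ‖t ^ (-1 - q) * f t‖ ≤ |f t| := by
    intro q hq t ht
    have ht1 : (1:ℝ) < t := ht
    rw [norm_mul, Real.norm_eq_abs, Real.norm_eq_abs,
      abs_of_nonneg (Real.rpow_nonneg (by linarith) _)]
    have h1 : t ^ (-1 - q) ≤ 1 :=
      Real.rpow_le_one_of_one_le_of_nonpos ht1.le
        (by have := hq.1; have := Nat.cast_nonneg (α := ℝ) k; linarith)
    nlinarith [abs_nonneg (f t)]
  have hB_int : ∀ q ∈ Ioo (k : ℝ) ((k : ℝ) + 1/2),
      IntegrableOn (fun t => t ^ (-1 - q) * f t) (Ioi (1:ℝ)) := by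
    intro q hq
    refine Integrable.mono' hfIoi1.abs (hmeasB q) ?_
    rw [ae_restrict_iff' measurableSet_Ioi]
    exact ae_of_all _ (hboundB q hq)
  have hB_tendsto : Tendsto B l (nhds (B k)) := by
    apply tendsto_integral_filter_of_dominated_convergence (fun t => |f t|)
      (Eventually.of_forall hmeasB)
    · filter_upwards [hev] with q hq
      rw [ae_restrict_iff' measurableSet_Ioi]
      exact ae_of_all _ (hboundB q hq)
    · exact hfIoi1.abs
    · rw [ae_restrict_iff' measurableSet_Ioi]
      refine ae_of_all _ fun t ht => ?_
      apply Tendsto.mul_const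
      have hc : ContinuousAt (fun q : ℝ => t ^ (-1 - q)) (k : ℝ) :=
        (Real.continuousAt_const_rpow (ne_of_gt (lt_trans zero_lt_one ht))).comp
          ((continuous_const.sub continuous_id).continuousAt)
      exact hc.tendsto.mono_left nhdsWithin_le_nhds
  -- power integrals on Ioi 1
  have hpow_congr : ∀ (q : ℝ) (j : ℕ), EqOn (fun t : ℝ => t ^ (-1 - q) * (a j * t ^ j))
      (fun t : ℝ => a j * t ^ ((j : ℝ) - 1 - q)) (Ioi (1:ℝ)) := by
    intro q j t ht
    have ht0 : (0:ℝ) < t := lt_trans zero_lt_one ht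
    simp only
    rw [← Real.rpow_natCast t j, mul_left_comm, ← Real.rpow_add ht0]
    congr 2
    ring
  have hpow_int : ∀ q ∈ Ioo (k : ℝ) ((k : ℝ) + 1/2), ∀ j ∈ Finset.range (k + 1),
      IntegrableOn (fun t => t ^ (-1 - q) * (a j * t ^ j)) (Ioi (1:ℝ)) := by
    intro q hq j hj
    have hjk : (j : ℝ) ≤ k := by
      have := Nat.lt_succ_iff.1 (Finset.mem_range.1 hj); exact_mod_cast this
    have hlt : (j : ℝ) - 1 - q < -1 := by have := hq.1; linarith
    refine IntegrableOn.congr_fun ?_ (fun t ht => (hpow_congr q j ht).symm) measurableSet_Ioi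
    exact (integrableOn_Ioi_rpow_of_lt hlt zero_lt_one).const_mul (a j)
  have hpow_val : ∀ q ∈ Ioo (k : ℝ) ((k : ℝ) + 1/2), ∀ j ∈ Finset.range (k + 1),
      ∫ t in Ioi (1:ℝ), t ^ (-1 - q) * (a j * t ^ j) = a j / (q - j) := by
    intro q hq j hj
    have hjk : (j : ℝ) ≤ k := by
      have := Nat.lt_succ_iff.1 (Finset.mem_range.1 hj); exact_mod_cast this
    have hlt : (j : ℝ) - 1 - q < -1 := by have := hq.1; linarith
    have hqj : q - (j : ℝ) ≠ 0 := by have := hq.1; intro h; linarith [sub_eq_zero.1 h]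
    rw [setIntegral_congr_fun measurableSet_Ioi (hpow_congr q j)]
    rw [MeasureTheory.integral_const_mul, integral_Ioi_rpow_of_lt hlt zero_lt_one]
    rw [Real.one_rpow]
    rw [show (j:ℝ) - 1 - q + 1 = -(q - (j:ℝ)) by ring, div_neg, neg_div, neg_neg,
      mul_one_div]
  -- integrability of R-integrand on Ioi 1 and value
  have hprod_eq : ∀ q : ℝ, (fun t : ℝ => t ^ (-1 - q) * R t)
      = fun t => t ^ (-1 - q) * f t - ∑ j ∈ Finset.range (k + 1), t ^ (-1 - q) * (a j * t ^ j) := by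
    intro q; funext t
    simp only [hR, hS, mul_sub, Finset.mul_sum]
  have hRIoi1_int : ∀ q ∈ Ioo (k : ℝ) ((k : ℝ) + 1/2),
      IntegrableOn (fun t => t ^ (-1 - q) * R t) (Ioi (1:ℝ)) := by
    intro q hq
    rw [hprod_eq q]
    exact (hB_int q hq).sub (integrable_finset_sum _ (hpow_int q hq))
  have hIoi1_val : ∀ q ∈ Ioo (k : ℝ) ((k : ℝ) + 1/2),
      ∫ t in Ioi (1:ℝ), t ^ (-1 - q) * R t
        = B q - ∑ j ∈ Finset.range (k + 1), a j / (q - j) := by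
    intro q hq
    rw [hprod_eq q, integral_sub (hB_int q hq) (integrable_finset_sum _ (hpow_int q hq)),
      integral_finset_sum _ (hpow_int q hq)]
    rw [Finset.sum_congr rfl (hpow_val q hq)]
  have hsplit : ∀ q ∈ Ioo (k : ℝ) ((k : ℝ) + 1/2),
      ∫ t in Ioi (0:ℝ), t ^ (-1 - q) * R t
        = A q + (B q - ∑ j ∈ Finset.range (k + 1), a j / (q - j)) := by
    intro q hq
    rw [← Ioc_union_Ioi_eq_Ioi (zero_le_one (α := ℝ)),
      setIntegral_union (Ioc_disjoint_Ioi le_rfl) measurableSet_Ioi (hA_int q hq)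
        (hRIoi1_int q hq), hIoi1_val q hq]
  -- Gamma identity
  have hgamma : ∀ q ∈ Ioo (k : ℝ) ((k : ℝ) + 1/2),
      1 / Real.Gamma (-q) = P q / Real.Gamma ((k : ℝ) + 1 - q) := by
    intro q hq
    have hqk : (k : ℝ) < q := hq.1
    have h1 := gamma_prod (k + 1) (-q) (fun i hi => by
      have hik : (i : ℝ) ≤ k := by exact_mod_cast Nat.lt_succ_iff.1 hi
      intro h; linarith)
    rw [show (-q + ((k + 1 : ℕ) : ℝ)) = (k : ℝ) + 1 - q by push_cast; ring] at h1
    rw [show (∏ i ∈ Finset.range (k + 1), (-q + (i : ℝ))) = P q from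
      Finset.prod_congr rfl fun i _ => by ring] at h1
    have hPne : P q ≠ 0 := by
      simp only [hP]
      refine Finset.prod_ne_zero_iff.2 fun i hi => sub_ne_zero.2 ?_
      have hik : (i : ℝ) ≤ k := by exact_mod_cast Nat.lt_succ_iff.1 (Finset.mem_range.1 hi)
      intro h; rw [h] at hik; linarith
    rw [h1, div_mul_cancel_left₀ hPne, one_div]
  -- main pointwise identity on the filter
  have heq_main : ∀ q ∈ Ioo (k : ℝ) ((k : ℝ) + 1/2),
      (1 / Real.Gamma (-q)) * (∫ t in Ioi (0:ℝ), t ^ (-1 - q) *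
          (f t - ∑ j ∈ Finset.range (k + 1), t ^ j / (Nat.factorial j) * iteratedDeriv j f 0))
        = (P q * (A q + B q) + ∑ j ∈ Finset.range (k + 1), a j * Q j q)
            / Real.Gamma ((k : ℝ) + 1 - q) := by
    intro q hq
    have hqk : (k : ℝ) < q := hq.1
    have hIeq : (∫ t in Ioi (0:ℝ), t ^ (-1 - q) *
          (f t - ∑ j ∈ Finset.range (k + 1), t ^ j / (Nat.factorial j) * iteratedDeriv j f 0))
        = ∫ t in Ioi (0:ℝ), t ^ (-1 - q) * R t := by
      congr 1; funext t
      simp only [hR, hS, ha]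
      have hsum : (∑ j ∈ Finset.range (k + 1), t ^ j / (Nat.factorial j : ℝ) * iteratedDeriv j f 0)
          = ∑ j ∈ Finset.range (k + 1), iteratedDeriv j f 0 / (Nat.factorial j : ℝ) * t ^ j :=
        Finset.sum_congr rfl fun j _ => by ring
      rw [hsum]
    rw [hIeq, hsplit q hq, hgamma q hq]
    have hterm : ∀ j ∈ Finset.range (k + 1), P q * (a j / (q - j)) = -(a j * Q j q) := by
      intro j hj
      have hjk : (j : ℝ) ≤ k := by exact_mod_cast Nat.lt_succ_iff.1 (Finset.mem_range.1 hj)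
      have hqj : q - (j : ℝ) ≠ 0 := by intro h; rw [sub_eq_zero] at h; rw [h] at hqk; linarith
      have hPj : P q = ((j : ℝ) - q) * Q j q := by
        simp only [hP, hQ]
        exact (Finset.mul_prod_erase _ _ hj).symm
      rw [hPj, show ((j : ℝ) - q) = -(q - (j : ℝ)) by ring]
      field_simp
    rw [div_mul_eq_mul_div]
    congr 1
    rw [show A q + (B q - ∑ j ∈ Finset.range (k + 1), a j / (q - j))
        = (A q + B q) - ∑ j ∈ Finset.range (k + 1), a j / (q - j) by ring,
      mul_sub, Finset.mul_sum, Finset.sum_congr rfl hterm, Finset.sum_neg_distrib,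
      sub_neg_eq_add]
  -- tendsto pieces
  have hPcont : Continuous P := by
    simp only [hP]
    exact continuous_finset_prod _ fun i _ => continuous_const.sub continuous_id
  have hP_t : Tendsto P l (nhds 0) := by
    have h0 : P (k : ℝ) = 0 := by
      simp only [hP]
      exact Finset.prod_eq_zero (Finset.self_mem_range_succ k) (sub_self _)
    exact h0 ▸ (hPcont.tendsto _).mono_left nhdsWithin_le_nhds
  have hQcont : ∀ j, Continuous (Q j) := by
    intro j
    simp only [hQ]
    exact continuous_finset_prod _ fun i _ => continuous_const.sub continuous_id
  have hQsum_t : Tendsto (fun q => ∑ j ∈ Finset.range (k + 1), a j * Q j q) l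
      (nhds ((-1 : ℝ) ^ k * iteratedDeriv k f 0)) := by
    have hcontsum : Continuous (fun q : ℝ => ∑ j ∈ Finset.range (k + 1), a j * Q j q) :=
      continuous_finset_sum _ fun j _ => continuous_const.mul (hQcont j)
    have hval : (∑ j ∈ Finset.range (k + 1), a j * Q j (k : ℝ))
        = (-1 : ℝ) ^ k * iteratedDeriv k f 0 := by
      rw [Finset.sum_eq_single k]
      · have hQk : Q k (k : ℝ) = (-1 : ℝ) ^ k * (Nat.factorial k) := by
          simp only [hQ]
          rw [Finset.range_add_one, Finset.erase_insert Finset.notMem_range_self]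
          exact prod_range_cast_sub k
        rw [hQk]
        simp only [ha]
        have hfac : ((Nat.factorial k : ℝ)) ≠ 0 := by positivity
        field_simp
      · intro j hj hjk
        have hz : Q j (k : ℝ) = 0 := by
          simp only [hQ]
          refine Finset.prod_eq_zero (Finset.mem_erase.2 ⟨fun h => hjk h.symm,
            Finset.self_mem_range_succ k⟩) (sub_self _)
        rw [hz, mul_zero]
      · intro h; exact absurd (Finset.self_mem_range_succ k) h
    exact hval ▸ (hcontsum.tendsto _).mono_left nhdsWithin_le_nhds
  have hΓ_t : Tendsto (fun q : ℝ => Real.Gamma ((k : ℝ) + 1 - q)) l (nhds 1) := by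
    have h1 : ContinuousAt Real.Gamma ((k : ℝ) + 1 - (k : ℝ)) := by
      refine (Real.differentiableAt_Gamma ?_).continuousAt
      intro m
      have h0 : (0 : ℝ) ≤ (m : ℝ) := Nat.cast_nonneg m
      intro h; linarith [h]
    have h2 : Tendsto (fun q : ℝ => (k : ℝ) + 1 - q) l (nhds ((k : ℝ) + 1 - (k : ℝ))) :=
      ((continuous_const.sub continuous_id).tendsto _).mono_left nhdsWithin_le_nhds
    have h3 := (h1.tendsto).comp h2
    rw [show (k : ℝ) + 1 - (k : ℝ) = 1 by ring, Real.Gamma_one] at h3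
    exact h3
  have hfinal := ((hP_t.mul (hA_tendsto.add hB_tendsto)).add hQsum_t).div hΓ_t one_ne_zero
  rw [zero_mul, zero_add, div_one] at hfinal
  refine hfinal.congr' ?_
  filter_upwards [hev] with q hq
  exact (heq_main q hq).symm
end

section
/- Let n ≥ 5, let q ∈ (2, 3], set p = −n+q+2, let N > 0, let a_N be the unique positive root of 1 − t² − N t⁴ = 0, let f_N(t) = (1 − t² − N t⁴)^{1/(q+1)} for |t| ≤ a_N, and define A_N(t) = c_{n} ∫₀^{f_N(t)} (t² + r²)^{p/2} r^{n−2} dr for |t| ≤ a_N, where c_{n} is the surface area of the unit sphere S^{n−2} in ℝ^{n−1}. Then A_N(0) = c_{n}/(n+p−1) and A_N''(0) = c_{n} ( p/(n+p−3) − 2/(n+p−1) ), where A_N''(0) is the second derivative of A_N at 0. -/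
open MeasureTheory

/-- The surface area of the unit sphere `S^{m-1}` in `ℝ^m` (total mass of the
surface measure). -/
noncomputable def sphereArea (m : ℕ) : ℝ :=
  (((volume : Measure (EuclideanSpace ℝ (Fin m))).toSphere) Set.univ).toReal

/-- The profile function `f_N(t) = (1 - t² - N t⁴)^{1/(q+1)}`. -/
noncomputable def fN (N q t : ℝ) : ℝ :=
  (1 - t ^ 2 - N * t ^ 4) ^ ((1 : ℝ) / (q + 1))

/-- The weighted parallel section function of the body of revolution `L_N`:
`A_N(t) = c_n ∫₀^{f_N(t)} (t² + r²)^{p/2} r^{n-2} dr` for `|t| ≤ a_N`, where `c_n` is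
the surface area of the unit sphere `S^{n-2}` in `ℝ^{n-1}`. -/
noncomputable def AN (n : ℕ) (N q p a t : ℝ) : ℝ :=
  if |t| ≤ a then
    sphereArea (n - 1) *
      ∫ r in (0 : ℝ)..(fN N q t), (t ^ 2 + r ^ 2) ^ (p / 2) * r ^ ((n : ℝ) - 2)
  else 0


namespace ANaux
open intervalIntegral Real Filter Metric Topology


noncomputable def hh (N t : ℝ) : ℝ := 1 - t ^ 2 - N * t ^ 4
noncomputable def hh1 (N t : ℝ) : ℝ := -(2 * t) - N * (4 * t ^ 3)
noncomputable def hh2 (N t : ℝ) : ℝ := -2 - N * (12 * t ^ 2)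
noncomputable def del (N : ℝ) : ℝ := 1 / (2 * (1 + N))

variable {N q t : ℝ}

lemma hh_hasDeriv (N t : ℝ) : HasDerivAt (hh N) (hh1 N t) t := by
  unfold hh hh1
  refine HasDerivAt.congr_deriv (((hasDerivAt_const t (1:ℝ)).sub (hasDerivAt_pow 2 t)).sub
    ((hasDerivAt_pow 4 t).const_mul N)) ?_
  ring

lemma hh1_hasDeriv (N t : ℝ) : HasDerivAt (hh1 N) (hh2 N t) t := by
  unfold hh1 hh2
  refine HasDerivAt.congr_deriv ((((hasDerivAt_id t).const_mul (2:ℝ)).neg).sub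
    (((hasDerivAt_pow 3 t).const_mul (4:ℝ)).const_mul N)) ?_
  ring

lemma del_pos (hN : 0 < N) : 0 < del N := by
  unfold del; positivity

lemma del_le_one (hN : 0 < N) : del N ≤ 1 := by
  unfold del
  rw [div_le_one (by linarith)]
  linarith

lemma hh_ge (hN : 0 < N) (ht : |t| ≤ del N) : 1/2 ≤ hh N t := by
  have h1 : t^2 ≤ del N ^ 2 := by
    rw [← sq_abs]
    exact pow_le_pow_left₀ (abs_nonneg t) ht 2
  have h2 : t^4 ≤ del N ^ 4 := by
    calc t^4 = |t|^4 := by rw [← abs_pow]; rw [abs_of_nonneg (by positivity)]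
    _ ≤ del N ^ 4 := pow_le_pow_left₀ (abs_nonneg t) ht 4
  have hd1 : del N ≤ 1 := del_le_one hN
  have hdpos : 0 < del N := del_pos hN
  have h3 : del N ^ 2 ≤ del N := by nlinarith
  have h4 : del N ^ 4 ≤ del N := by nlinarith
  have key : del N * (1 + N) ≤ 1/2 := by
    unfold del; rw [div_mul_eq_mul_div, one_mul, div_le_div_iff₀ (by linarith) (by norm_num)]
    linarith
  unfold hh
  nlinarith

lemma hh_le_one (hN : 0 < N) (t : ℝ) : hh N t ≤ 1 := by
  unfold hh
  have h1 : (0:ℝ) ≤ t^2 := sq_nonneg t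
  have h2 : (0:ℝ) ≤ N * t^4 := by positivity
  linarith

/-- first derivative of `fN` -/
noncomputable def ff1 (N q t : ℝ) : ℝ :=
  hh1 N t * (1/(q+1)) * hh N t ^ ((1:ℝ)/(q+1) - 1)

/-- second derivative of `fN` -/
noncomputable def ff2 (N q t : ℝ) : ℝ :=
  hh2 N t * (1/(q+1)) * hh N t ^ ((1:ℝ)/(q+1) - 1)
    + hh1 N t * (1/(q+1)) * (hh1 N t * ((1:ℝ)/(q+1) - 1) * hh N t ^ ((1:ℝ)/(q+1) - 1 - 1))

variable {N q t : ℝ}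

lemma fN_eq (N q t : ℝ) : fN N q t = hh N t ^ ((1:ℝ)/(q+1)) := rfl

lemma fN_hasDeriv (hN : 0 < N) (ht : |t| ≤ del N) :
    HasDerivAt (fN N q) (ff1 N q t) t := by
  have := (hh_hasDeriv N t).rpow_const (p := (1:ℝ)/(q+1))
    (Or.inl (by have := hh_ge hN ht; linarith))
  exact this

lemma ff1_hasDeriv (hN : 0 < N) (ht : |t| ≤ del N) :
    HasDerivAt (ff1 N q) (ff2 N q t) t := by
  have h0 : hh N t ≠ 0 := by have := hh_ge hN ht; linarith
  have h1 : HasDerivAt (fun t => hh N t ^ ((1:ℝ)/(q+1) - 1))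
      (hh1 N t * ((1:ℝ)/(q+1) - 1) * hh N t ^ ((1:ℝ)/(q+1) - 1 - 1)) t :=
    (hh_hasDeriv N t).rpow_const (Or.inl h0)
  exact ((hh1_hasDeriv N t).mul_const (1/(q+1))).mul h1

lemma hh_zero (N : ℝ) : hh N 0 = 1 := by simp [hh]
lemma hh1_zero (N : ℝ) : hh1 N 0 = 0 := by simp [hh1]
lemma hh2_zero (N : ℝ) : hh2 N 0 = -2 := by simp [hh2]
lemma fN_zero (N q : ℝ) : fN N q 0 = 1 := by rw [fN_eq, hh_zero, Real.one_rpow]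
lemma ff1_zero (N q : ℝ) : ff1 N q 0 = 0 := by simp [ff1, hh1_zero]
lemma ff2_zero (N q : ℝ) : ff2 N q 0 = -2 / (q+1) := by
  simp [ff2, hh1_zero, hh2_zero, hh_zero]
  ring

-- bounds, assuming 2 < q ≤ 3
lemma alpha_mem (hq1 : 2 < q) (hq2 : q ≤ 3) :
    0 < (1:ℝ)/(q+1) ∧ (1:ℝ)/(q+1) ≤ 1 := by
  constructor
  · positivity
  · rw [div_le_one (by linarith)]; linarith

lemma fN_le_one (hN : 0 < N) (hq1 : 2 < q) (ht : |t| ≤ del N) : fN N q t ≤ 1 := by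
  rw [fN_eq]
  exact Real.rpow_le_one (by have := hh_ge hN ht; linarith) (hh_le_one hN t) (by positivity)

lemma fN_ge (hN : 0 < N) (hq1 : 2 < q) (hq2 : q ≤ 3) (ht : |t| ≤ del N) :
    1/2 ≤ fN N q t := by
  have h1 := hh_ge hN ht
  have h2 := hh_le_one hN t
  calc (1:ℝ)/2 ≤ hh N t := h1
  _ = hh N t ^ (1:ℝ) := (Real.rpow_one _).symm
  _ ≤ hh N t ^ ((1:ℝ)/(q+1)) := by
      exact Real.rpow_le_rpow_of_exponent_ge (by linarith) h2 (alpha_mem hq1 hq2).2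
  _ = fN N q t := (fN_eq N q t).symm

lemma hpow_le (hN : 0 < N) (ht : |t| ≤ del N) {e : ℝ} (he : e ≤ 0) (he2 : -2 ≤ e) :
    hh N t ^ e ≤ 4 := by
  have h1 := hh_ge hN ht
  calc hh N t ^ e ≤ ((1:ℝ)/2) ^ e := Real.rpow_le_rpow_of_nonpos (by norm_num) h1 he
  _ = 2 ^ (-e) := by rw [one_div, ← Real.rpow_neg_one, ← Real.rpow_mul (by norm_num)]; ring_nf
  _ ≤ 2 ^ (2:ℝ) := Real.rpow_le_rpow_of_exponent_le (by norm_num) (by linarith)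
  _ = 4 := by rw [show (2:ℝ) = ((2:ℕ):ℝ) by norm_num, Real.rpow_natCast]; norm_num

lemma hh1_abs_le (hN : 0 < N) (ht : |t| ≤ del N) : |hh1 N t| ≤ 2 + 4*N := by
  have h1 : |t| ≤ 1 := le_trans ht (del_le_one hN)
  have h3 : |t|^3 ≤ 1 := pow_le_one₀ (abs_nonneg t) h1
  unfold hh1
  calc |(-(2*t) - N*(4*t^3))| ≤ |(-(2*t))| + |N*(4*t^3)| := abs_sub _ _
  _ = 2*|t| + 4*N*|t|^3 := by
      rw [abs_neg, abs_mul, abs_mul, abs_mul, abs_pow]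
      rw [abs_of_nonneg hN.le, abs_of_nonneg (by norm_num : (0:ℝ) ≤ 2),
        abs_of_nonneg (by norm_num : (0:ℝ) ≤ 4)]
      ring
  _ ≤ 2 + 4*N := by nlinarith

lemma hh2_abs_le (hN : 0 < N) (ht : |t| ≤ del N) : |hh2 N t| ≤ 2 + 12*N := by
  have h1 : |t| ≤ 1 := le_trans ht (del_le_one hN)
  have h2 : t^2 ≤ 1 := by rw [← sq_abs]; exact pow_le_one₀ (abs_nonneg t) h1
  unfold hh2
  have e1 : (0:ℝ) ≤ 2 + N*(12*t^2) := by positivity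
  calc |(-2 - N*(12*t^2))| = 2 + N*(12*t^2) := by rw [show (-2 - N*(12*t^2)) = -(2 + N*(12*t^2)) by ring, abs_neg, abs_of_nonneg e1]
  _ ≤ 2 + 12*N := by nlinarith

noncomputable def Kf1 (N q : ℝ) : ℝ := (2 + 4*N) * 4
noncomputable def Kf2 (N q : ℝ) : ℝ := (2 + 12*N) * 4 + (2 + 4*N) * ((2 + 4*N) * 4)

lemma ff1_abs_le (hN : 0 < N) (hq1 : 2 < q) (hq2 : q ≤ 3) (ht : |t| ≤ del N) :
    |ff1 N q t| ≤ Kf1 N q := by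
  have hα := alpha_mem hq1 hq2
  have h1 := hh1_abs_le hN ht
  have h2 : hh N t ^ ((1:ℝ)/(q+1) - 1) ≤ 4 := hpow_le hN ht (by linarith [hα.2]) (by linarith [hα.1])
  have h2' : (0:ℝ) ≤ hh N t ^ ((1:ℝ)/(q+1) - 1) :=
    Real.rpow_nonneg (by have := hh_ge hN ht; linarith) _
  unfold ff1 Kf1
  rw [abs_mul, abs_mul]
  have hαabs : |1/(q+1)| ≤ 1 := by rw [abs_of_nonneg hα.1.le]; exact hα.2
  have e1 : |hh1 N t| * |1/(q+1)| ≤ (2+4*N) := by nlinarith [abs_nonneg (hh1 N t)]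
  rw [abs_of_nonneg h2']
  nlinarith [abs_nonneg (hh1 N t), mul_nonneg (abs_nonneg (hh1 N t)) (abs_nonneg (1/(q+1)))]

lemma ff2_abs_le (hN : 0 < N) (hq1 : 2 < q) (hq2 : q ≤ 3) (ht : |t| ≤ del N) :
    |ff2 N q t| ≤ Kf2 N q := by
  have hα := alpha_mem hq1 hq2
  have h1 := hh1_abs_le hN ht
  have h1' := hh2_abs_le hN ht
  have h2 : hh N t ^ ((1:ℝ)/(q+1) - 1) ≤ 4 := hpow_le hN ht (by linarith [hα.2]) (by linarith [hα.1])
  have h3 : hh N t ^ ((1:ℝ)/(q+1) - 1 - 1) ≤ 4 := hpow_le hN ht (by linarith [hα.2]) (by linarith [hα.1])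
  have h2' : (0:ℝ) ≤ hh N t ^ ((1:ℝ)/(q+1) - 1) :=
    Real.rpow_nonneg (by have := hh_ge hN ht; linarith) _
  have h3' : (0:ℝ) ≤ hh N t ^ ((1:ℝ)/(q+1) - 1 - 1) :=
    Real.rpow_nonneg (by have := hh_ge hN ht; linarith) _
  have hαabs : |1/(q+1)| ≤ 1 := by rw [abs_of_nonneg hα.1.le]; exact hα.2
  have hα1abs : |1/(q+1) - 1| ≤ 1 := by rw [abs_le]; constructor <;> [linarith [hα.1]; linarith [hα.2]]
  unfold ff2 Kf2
  have key : ∀ x y z : ℝ, |x * (1/(q+1)) * y| ≤ |x| * |y| := by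
    intro x y z
    rw [abs_mul, abs_mul]
    exact mul_le_mul_of_nonneg_right (mul_le_of_le_one_right (abs_nonneg x) hαabs) (abs_nonneg y)
  calc |hh2 N t * (1/(q+1)) * hh N t ^ ((1:ℝ)/(q+1) - 1)
      + hh1 N t * (1/(q+1)) * (hh1 N t * ((1:ℝ)/(q+1) - 1) * hh N t ^ ((1:ℝ)/(q+1) - 1 - 1))|
      ≤ |hh2 N t * (1/(q+1)) * hh N t ^ ((1:ℝ)/(q+1) - 1)|
      + |hh1 N t * (1/(q+1)) * (hh1 N t * ((1:ℝ)/(q+1) - 1) * hh N t ^ ((1:ℝ)/(q+1) - 1 - 1))| :=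
        abs_add_le _ _
  _ ≤ |hh2 N t| * |hh N t ^ ((1:ℝ)/(q+1) - 1)|
      + |hh1 N t| * |hh1 N t * ((1:ℝ)/(q+1) - 1) * hh N t ^ ((1:ℝ)/(q+1) - 1 - 1)| :=
        add_le_add (key _ _ 0) (key _ _ 0)
  _ ≤ (2 + 12*N) * 4 + (2 + 4*N) * ((2 + 4*N) * 4) := by
      rw [abs_of_nonneg h2']
      have inner : |hh1 N t * ((1:ℝ)/(q+1) - 1) * hh N t ^ ((1:ℝ)/(q+1) - 1 - 1)|
          ≤ (2 + 4*N) * 4 := by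
        rw [abs_mul, abs_mul, abs_of_nonneg h3']
        have e0 : |hh1 N t| * |(1:ℝ)/(q+1) - 1| ≤ 2 + 4*N :=
          le_trans (mul_le_of_le_one_right (abs_nonneg _) hα1abs) h1
        have := mul_le_mul e0 h3 h3' (by linarith)
        linarith
      have e1 : |hh2 N t| * hh N t ^ ((1:ℝ)/(q+1) - 1) ≤ (2 + 12*N) * 4 := by
        nlinarith [abs_nonneg (hh2 N t)]
      nlinarith [abs_nonneg (hh1 N t), abs_nonneg (hh1 N t * ((1:ℝ)/(q+1) - 1) * hh N t ^ ((1:ℝ)/(q+1) - 1 - 1))]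

noncomputable def psi (N q t s : ℝ) : ℝ := t^2 + (fN N q t * s)^2
noncomputable def psi1 (N q t s : ℝ) : ℝ :=
  2*t + 2*((fN N q t * s)*(ff1 N q t * s))
noncomputable def psi2 (N q t s : ℝ) : ℝ :=
  2 + 2*((ff1 N q t * s)*(ff1 N q t * s) + (fN N q t * s)*(ff2 N q t * s))

noncomputable def G (m q p N t s : ℝ) : ℝ :=
  psi N q t s ^ (p/2) * (fN N q t * s) ^ (m-2)

noncomputable def G1 (m q p N t s : ℝ) : ℝ :=
  (p/2) * psi N q t s ^ (p/2-1) * psi1 N q t s * (fN N q t * s) ^ (m-2)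
  + psi N q t s ^ (p/2) * ((m-2) * (fN N q t * s) ^ (m-2-1) * (ff1 N q t * s))

noncomputable def G2 (m q p N t s : ℝ) : ℝ :=
  (p/2) * ( (p/2-1) * psi N q t s ^ (p/2-1-1) * psi1 N q t s * psi1 N q t s
              * (fN N q t * s) ^ (m-2)
          + psi N q t s ^ (p/2-1) * psi2 N q t s * (fN N q t * s) ^ (m-2)
          + psi N q t s ^ (p/2-1) * psi1 N q t s
              * ((m-2) * (fN N q t * s) ^ (m-2-1) * (ff1 N q t * s)) )
  + (p/2) * psi N q t s ^ (p/2-1) * psi1 N q t s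
      * ((m-2) * (fN N q t * s) ^ (m-2-1) * (ff1 N q t * s))
  + psi N q t s ^ (p/2) * ((m-2) * ( (m-2-1) * (fN N q t * s) ^ (m-2-1-1)
      * (ff1 N q t * s) * (ff1 N q t * s)
      + (fN N q t * s) ^ (m-2-1) * (ff2 N q t * s) ))

variable {m q p N t s : ℝ}

lemma A_pos (hN : 0 < N) (hq1 : 2 < q) (hq2 : q ≤ 3) (ht : |t| ≤ del N)
    (hs : 0 < s) : 0 < fN N q t * s :=
  mul_pos (by linarith [fN_ge hN hq1 hq2 ht]) hs

lemma psi_pos (hN : 0 < N) (hq1 : 2 < q) (hq2 : q ≤ 3) (ht : |t| ≤ del N)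
    (hs : 0 < s) : 0 < psi N q t s := by
  have := A_pos hN hq1 hq2 ht hs
  unfold psi; positivity

lemma psi_hasDeriv (hN : 0 < N) (ht : |t| ≤ del N) :
    HasDerivAt (fun t => psi N q t s) (psi1 N q t s) t := by
  unfold psi psi1
  refine HasDerivAt.congr_deriv ((hasDerivAt_pow 2 t).add
    (((fN_hasDeriv hN ht).mul_const s).pow 2)) ?_
  push_cast
  ring

lemma psi1_hasDeriv (hN : 0 < N) (ht : |t| ≤ del N) :
    HasDerivAt (fun t => psi1 N q t s) (psi2 N q t s) t := by
  unfold psi1 psi2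
  refine HasDerivAt.congr_deriv (((hasDerivAt_id' t).const_mul 2).add
    ((((fN_hasDeriv hN ht).mul_const s).mul
      ((ff1_hasDeriv hN ht).mul_const s)).const_mul 2)) ?_
  ring

lemma G_hasDeriv (hN : 0 < N) (hq1 : 2 < q) (hq2 : q ≤ 3) (ht : |t| ≤ del N)
    (hs : 0 < s) : HasDerivAt (fun t => G m q p N t s) (G1 m q p N t s) t := by
  have hA := A_pos hN hq1 hq2 ht hs
  have hψ := psi_pos hN hq1 hq2 ht hs
  unfold G G1
  refine HasDerivAt.congr_deriv (((psi_hasDeriv hN ht).rpow_const (p := p/2) (Or.inl hψ.ne')).mul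
    (((fN_hasDeriv hN ht).mul_const s).rpow_const (p := m-2) (Or.inl hA.ne'))) ?_
  ring

lemma G1_hasDeriv (hN : 0 < N) (hq1 : 2 < q) (hq2 : q ≤ 3) (ht : |t| ≤ del N)
    (hs : 0 < s) : HasDerivAt (fun t => G1 m q p N t s) (G2 m q p N t s) t := by
  have hA := A_pos hN hq1 hq2 ht hs
  have hψ := psi_pos hN hq1 hq2 ht hs
  have d1 : HasDerivAt (fun t => psi N q t s ^ (p/2-1))
      (psi1 N q t s * (p/2-1) * psi N q t s ^ (p/2-1-1)) t :=
    (psi_hasDeriv hN ht).rpow_const (Or.inl hψ.ne')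
  have d2 : HasDerivAt (fun t => (fN N q t * s) ^ (m-2))
      ((ff1 N q t * s) * (m-2) * (fN N q t * s) ^ (m-2-1)) t :=
    ((fN_hasDeriv hN ht).mul_const s).rpow_const (Or.inl hA.ne')
  have d3 : HasDerivAt (fun t => (fN N q t * s) ^ (m-2-1))
      ((ff1 N q t * s) * (m-2-1) * (fN N q t * s) ^ (m-2-1-1)) t :=
    ((fN_hasDeriv hN ht).mul_const s).rpow_const (Or.inl hA.ne')
  have d4 : HasDerivAt (fun t => psi N q t s ^ (p/2))
      (psi1 N q t s * (p/2) * psi N q t s ^ (p/2-1)) t :=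
    (psi_hasDeriv hN ht).rpow_const (Or.inl hψ.ne')
  unfold G1 G2
  refine HasDerivAt.congr_deriv ((((d1.const_mul (p/2)).mul (psi1_hasDeriv hN ht)).mul d2).add
    (d4.mul ((d3.const_mul (m-2)).mul ((ff1_hasDeriv hN ht).mul_const s)))) ?_
  simp only [Pi.mul_apply]
  ring


-- context facts
section Bounds
variable (hN : 0 < N) (hq1 : 2 < q) (hq2 : q ≤ 3) (hm : 5 ≤ m) (hp : p = -m + q + 2)
  (ht : |t| ≤ del N) (hs : 0 < s) (hs1 : s ≤ 1)

include hN hq1 hq2 ht hs in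
lemma A_le_psi_half : fN N q t * s ≤ psi N q t s ^ ((1:ℝ)/2) := by
  have hA := A_pos hN hq1 hq2 ht hs
  have h1 : (fN N q t * s)^2 ≤ psi N q t s := by unfold psi; nlinarith [sq_nonneg t]
  calc fN N q t * s = Real.sqrt ((fN N q t * s)^2) := (Real.sqrt_sq hA.le).symm
  _ ≤ Real.sqrt (psi N q t s) := Real.sqrt_le_sqrt h1
  _ = psi N q t s ^ ((1:ℝ)/2) := Real.sqrt_eq_rpow _

include hN hq1 hq2 ht hs in
lemma abs_t_le_psi_half : |t| ≤ psi N q t s ^ ((1:ℝ)/2) := by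
  have hA := A_pos hN hq1 hq2 ht hs
  have h1 : t^2 ≤ psi N q t s := by unfold psi; nlinarith
  calc |t| = Real.sqrt (t^2) := (Real.sqrt_sq_eq_abs t).symm
  _ ≤ Real.sqrt (psi N q t s) := Real.sqrt_le_sqrt h1
  _ = psi N q t s ^ ((1:ℝ)/2) := Real.sqrt_eq_rpow _

include hN hq1 hq2 ht hs hs1 in
lemma psiA_le {E F : ℝ} (hE : E ≤ 0) (hEF : 0 ≤ 2*E + F) :
    psi N q t s ^ E * (fN N q t * s) ^ F ≤ 1 := by
  have hA := A_pos hN hq1 hq2 ht hs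
  have hA1 : fN N q t * s ≤ 1 := by
    have := fN_le_one hN hq1 ht
    have h0 : (0:ℝ) ≤ fN N q t := by linarith [fN_ge hN hq1 hq2 ht]
    nlinarith
  have hA2 : (fN N q t * s) ^ ((2:ℝ)) ≤ psi N q t s := by
    rw [show ((2:ℝ)) = ((2:ℕ):ℝ) by norm_num, Real.rpow_natCast]
    unfold psi; nlinarith [sq_nonneg t]
  have hA2pos : (0:ℝ) < (fN N q t * s) ^ ((2:ℝ)) := Real.rpow_pos_of_pos hA _
  calc psi N q t s ^ E * (fN N q t * s) ^ F
      ≤ ((fN N q t * s) ^ ((2:ℝ))) ^ E * (fN N q t * s) ^ F := by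
        exact mul_le_mul_of_nonneg_right
          (Real.rpow_le_rpow_of_nonpos hA2pos hA2 hE) (Real.rpow_nonneg hA.le _)
  _ = (fN N q t * s) ^ (2*E) * (fN N q t * s) ^ F := by
        rw [← Real.rpow_mul hA.le]
  _ = (fN N q t * s) ^ (2*E + F) := (Real.rpow_add hA _ _).symm
  _ ≤ 1 := Real.rpow_le_one hA.le hA1 hEF

noncomputable def Kpsi1 (N q : ℝ) : ℝ := 2 + 4 * Kf1 N q
noncomputable def Kpsi2 (N q : ℝ) : ℝ := 2 + 2*(Kf1 N q ^ 2 + Kf2 N q)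

include hN hq1 hq2 ht hs hs1 in
lemma psi1_abs_le' : |psi1 N q t s| ≤ Kpsi1 N q * psi N q t s ^ ((1:ℝ)/2) := by
  have hA := A_pos hN hq1 hq2 ht hs
  have hAh := A_le_psi_half hN hq1 hq2 ht hs
  have hth := abs_t_le_psi_half hN hq1 hq2 ht hs
  have hf1 := ff1_abs_le hN hq1 hq2 ht
  have hf1nn : (0:ℝ) ≤ Kf1 N q := le_trans (abs_nonneg _) hf1
  have hA1 : fN N q t ≤ 1 := fN_le_one hN hq1 ht
  have hs2A : s ≤ 2 * (fN N q t * s) := by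
    have := fN_ge hN hq1 hq2 ht; nlinarith
  unfold psi1 Kpsi1
  have e1 : |2*t + 2*((fN N q t * s)*(ff1 N q t * s))|
      ≤ 2*|t| + 2*((fN N q t * s) * (Kf1 N q * s)) := by
    have h2 : |(fN N q t * s)*(ff1 N q t * s)| ≤ (fN N q t * s) * (Kf1 N q * s) := by
      rw [abs_mul, abs_of_nonneg hA.le, abs_mul, abs_of_nonneg hs.le]
      exact mul_le_mul_of_nonneg_left (mul_le_mul_of_nonneg_right hf1 hs.le) hA.le
    calc |2*t + 2*((fN N q t * s)*(ff1 N q t * s))|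
        ≤ |2*t| + |2*((fN N q t * s)*(ff1 N q t * s))| := abs_add_le _ _
    _ ≤ 2*|t| + 2*((fN N q t * s) * (Kf1 N q * s)) := by
        rw [abs_mul, abs_mul]
        simp only [abs_of_nonneg (by norm_num : (0:ℝ) ≤ 2)]
        exact add_le_add le_rfl (mul_le_mul_of_nonneg_left h2 (by norm_num))
  refine le_trans e1 ?_
  have e2 : (fN N q t * s) * (Kf1 N q * s) ≤ Kf1 N q * (2 * psi N q t s ^ ((1:ℝ)/2)) := by
    have hAs : fN N q t * s ≤ 1 := by nlinarith
    have h3 : s ≤ 2 * psi N q t s ^ ((1:ℝ)/2) := le_trans hs2A (by nlinarith)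
    calc (fN N q t * s) * (Kf1 N q * s) = Kf1 N q * ((fN N q t * s) * s) := by ring
    _ ≤ Kf1 N q * s := mul_le_mul_of_nonneg_left
        (by nlinarith) hf1nn
    _ ≤ Kf1 N q * (2 * psi N q t s ^ ((1:ℝ)/2)) := mul_le_mul_of_nonneg_left h3 hf1nn
  nlinarith [Real.rpow_nonneg (psi_pos hN hq1 hq2 ht hs).le ((1:ℝ)/2)]

include hN hq1 hq2 ht hs hs1 in
lemma psi2_abs_le' : |psi2 N q t s| ≤ Kpsi2 N q := by
  have hA := A_pos hN hq1 hq2 ht hs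
  have hf1 := ff1_abs_le hN hq1 hq2 ht
  have hf2 := ff2_abs_le hN hq1 hq2 ht
  have hf1nn : (0:ℝ) ≤ Kf1 N q := le_trans (abs_nonneg _) hf1
  have hf2nn : (0:ℝ) ≤ Kf2 N q := le_trans (abs_nonneg _) hf2
  have hA1 : fN N q t * s ≤ 1 := by
    have := fN_le_one hN hq1 ht
    have h0 : (0:ℝ) ≤ fN N q t := by linarith [fN_ge hN hq1 hq2 ht]
    nlinarith
  have e1 : |ff1 N q t * s| ≤ Kf1 N q := by
    rw [abs_mul, abs_of_nonneg hs.le]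
    nlinarith [abs_nonneg (ff1 N q t)]
  have e2 : |ff2 N q t * s| ≤ Kf2 N q := by
    rw [abs_mul, abs_of_nonneg hs.le]
    nlinarith [abs_nonneg (ff2 N q t)]
  unfold psi2 Kpsi2
  have step : |(ff1 N q t * s)*(ff1 N q t * s) + (fN N q t * s)*(ff2 N q t * s)|
      ≤ Kf1 N q ^ 2 + Kf2 N q := by
    calc |(ff1 N q t * s)*(ff1 N q t * s) + (fN N q t * s)*(ff2 N q t * s)|
        ≤ |(ff1 N q t * s)*(ff1 N q t * s)| + |(fN N q t * s)*(ff2 N q t * s)| := abs_add_le _ _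
    _ ≤ Kf1 N q ^ 2 + Kf2 N q := by
        have h1 : |(ff1 N q t * s)*(ff1 N q t * s)| ≤ Kf1 N q ^ 2 := by
          rw [abs_mul]
          nlinarith [abs_nonneg (ff1 N q t * s)]
        have h2 : |(fN N q t * s)*(ff2 N q t * s)| ≤ Kf2 N q := by
          rw [abs_mul, abs_of_nonneg hA.le]
          nlinarith [abs_nonneg (ff2 N q t * s), mul_le_mul hA1 e2 (abs_nonneg _) (by norm_num : (0:ℝ) ≤ 1)]
        linarith
  calc |2 + 2*((ff1 N q t * s)*(ff1 N q t * s) + (fN N q t * s)*(ff2 N q t * s))|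
      ≤ 2 + 2*|((ff1 N q t * s)*(ff1 N q t * s) + (fN N q t * s)*(ff2 N q t * s))| := by
        refine le_trans (abs_add_le _ _) ?_
        rw [abs_mul]
        simp [abs_of_nonneg (by norm_num : (0:ℝ) ≤ 2)]
  _ ≤ 2 + 2*(Kf1 N q ^ 2 + Kf2 N q) := by linarith
  _ = Kpsi2 N q := rfl


lemma mul_bound {x y X Y : ℝ} (hx : |x| ≤ X) (hy : |y| ≤ Y) : |x*y| ≤ X*Y := by
  rw [abs_mul]
  exact mul_le_mul hx hy (abs_nonneg _) (le_trans (abs_nonneg _) hx)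

include hN hq1 hq2 hm hp ht hs hs1 in
lemma G_le_one' : G m q p N t s ≤ 1 := by
  have := psiA_le hN hq1 hq2 ht hs hs1 (E := p/2) (F := m-2)
    (by linarith) (by linarith)
  exact this

include hN hq1 hq2 ht hs in
lemma G_nonneg' : 0 ≤ G m q p N t s := by
  have hA := A_pos hN hq1 hq2 ht hs
  have hψ := psi_pos hN hq1 hq2 ht hs
  unfold G
  positivity

lemma Kf1_nonneg (hN : 0 < N) : 0 ≤ Kf1 N q := by unfold Kf1; nlinarith
lemma Kf2_nonneg (hN : 0 < N) : 0 ≤ Kf2 N q := by unfold Kf2; nlinarith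
lemma Kpsi1_nonneg (hN : 0 < N) : 0 ≤ Kpsi1 N q := by
  have := Kf1_nonneg (q := q) hN; unfold Kpsi1; nlinarith
lemma Kpsi2_nonneg (hN : 0 < N) : 0 ≤ Kpsi2 N q := by
  have h1 := Kf1_nonneg (q := q) hN; have h2 := Kf2_nonneg (q := q) hN
  unfold Kpsi2; nlinarith

noncomputable def KG1 (m q p N : ℝ) : ℝ :=
  |p/2| * Kpsi1 N q + (m-2) * (Kf1 N q * 2)

include hN hq1 hq2 hm hp ht hs hs1 in
lemma ff1s_abs_le : |ff1 N q t * s| ≤ Kf1 N q * (2 * (fN N q t * s)) := by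
  have hf1 := ff1_abs_le hN hq1 hq2 ht
  have hf1nn : (0:ℝ) ≤ Kf1 N q := le_trans (abs_nonneg _) hf1
  have hs2A : s ≤ 2 * (fN N q t * s) := by
    have := fN_ge hN hq1 hq2 ht; nlinarith
  rw [abs_mul, abs_of_nonneg hs.le]
  calc |ff1 N q t| * s ≤ Kf1 N q * s := mul_le_mul_of_nonneg_right hf1 hs.le
  _ ≤ Kf1 N q * (2 * (fN N q t * s)) := mul_le_mul_of_nonneg_left hs2A hf1nn

include hN hq1 hq2 hm hp ht hs hs1 in
lemma ff2s_abs_le : |ff2 N q t * s| ≤ Kf2 N q * (2 * (fN N q t * s)) := by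
  have hf2 := ff2_abs_le hN hq1 hq2 ht
  have hf2nn : (0:ℝ) ≤ Kf2 N q := le_trans (abs_nonneg _) hf2
  have hs2A : s ≤ 2 * (fN N q t * s) := by
    have := fN_ge hN hq1 hq2 ht; nlinarith
  rw [abs_mul, abs_of_nonneg hs.le]
  calc |ff2 N q t| * s ≤ Kf2 N q * s := mul_le_mul_of_nonneg_right hf2 hs.le
  _ ≤ Kf2 N q * (2 * (fN N q t * s)) := mul_le_mul_of_nonneg_left hs2A hf2nn

include hN hq1 hq2 hm hp ht hs hs1 in
lemma G1_abs_le : |G1 m q p N t s| ≤ KG1 m q p N := by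
  have hA := A_pos hN hq1 hq2 ht hs
  have hψ := psi_pos hN hq1 hq2 ht hs
  have hψ1 := psi1_abs_le' hN hq1 hq2 ht hs hs1
  have hKψ1 : (0:ℝ) ≤ Kpsi1 N q := by
    unfold Kpsi1 Kf1; positivity
  have hKf1 : (0:ℝ) ≤ Kf1 N q := by unfold Kf1; positivity
  have leafψ : ∀ e : ℝ, |psi N q t s ^ e| ≤ psi N q t s ^ e :=
    fun e => le_of_eq (abs_of_nonneg (Real.rpow_nonneg hψ.le e))
  have leafA : ∀ e : ℝ, |(fN N q t * s) ^ e| ≤ (fN N q t * s) ^ e :=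
    fun e => le_of_eq (abs_of_nonneg (Real.rpow_nonneg hA.le e))
  have hm2 : (0:ℝ) ≤ m - 2 := by linarith
  have b1 : |(p/2) * psi N q t s ^ (p/2-1) * psi1 N q t s * (fN N q t * s) ^ (m-2)|
      ≤ (|p/2| * Kpsi1 N q) * 1 := by
    have h := mul_bound (mul_bound (mul_bound (le_refl |p/2|) (leafψ (p/2-1))) hψ1)
      (leafA (m-2))
    refine le_trans h ?_
    calc |p/2| * psi N q t s ^ (p/2-1) * (Kpsi1 N q * psi N q t s ^ ((1:ℝ)/2))
          * (fN N q t * s) ^ (m-2)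
        = (|p/2| * Kpsi1 N q) *
          ((psi N q t s ^ (p/2-1) * psi N q t s ^ ((1:ℝ)/2)) * (fN N q t * s) ^ (m-2)) := by
          ring
    _ = (|p/2| * Kpsi1 N q) *
          (psi N q t s ^ (p/2-1+(1:ℝ)/2) * (fN N q t * s) ^ (m-2)) := by
          rw [← Real.rpow_add hψ]
    _ ≤ (|p/2| * Kpsi1 N q) * 1 := by
          refine mul_le_mul_of_nonneg_left
            (psiA_le hN hq1 hq2 ht hs hs1 (by linarith) (by linarith)) (by positivity)
  have b2 : |psi N q t s ^ (p/2) * ((m-2) * (fN N q t * s) ^ (m-2-1) * (ff1 N q t * s))|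
      ≤ ((m-2) * (Kf1 N q * 2)) * 1 := by
    have h := mul_bound (leafψ (p/2)) (mul_bound (mul_bound
      (le_of_eq (abs_of_nonneg hm2)) (leafA (m-2-1)))
      (ff1s_abs_le hN hq1 hq2 hm hp ht hs hs1))
    refine le_trans h ?_
    calc psi N q t s ^ (p/2) * ((m-2) * (fN N q t * s) ^ (m-2-1)
          * (Kf1 N q * (2 * (fN N q t * s))))
        = ((m-2) * (Kf1 N q * 2)) *
          (psi N q t s ^ (p/2) * ((fN N q t * s) ^ (m-2-1) * (fN N q t * s) ^ (1:ℝ))) := by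
          rw [Real.rpow_one]; ring
    _ = ((m-2) * (Kf1 N q * 2)) *
          (psi N q t s ^ (p/2) * (fN N q t * s) ^ (m-2-1+1)) := by
          rw [← Real.rpow_add hA]
    _ ≤ ((m-2) * (Kf1 N q * 2)) * 1 := by
          refine mul_le_mul_of_nonneg_left
            (psiA_le hN hq1 hq2 ht hs hs1 (by linarith) (by linarith)) (by positivity)
  unfold G1 KG1
  calc |(p/2) * psi N q t s ^ (p/2-1) * psi1 N q t s * (fN N q t * s) ^ (m-2)
      + psi N q t s ^ (p/2) * ((m-2) * (fN N q t * s) ^ (m-2-1) * (ff1 N q t * s))|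
      ≤ |(p/2) * psi N q t s ^ (p/2-1) * psi1 N q t s * (fN N q t * s) ^ (m-2)|
      + |psi N q t s ^ (p/2) * ((m-2) * (fN N q t * s) ^ (m-2-1) * (ff1 N q t * s))| :=
        abs_add_le _ _
  _ ≤ |p/2| * Kpsi1 N q + (m-2) * (Kf1 N q * 2) := by
      have := b1; have := b2; linarith


noncomputable def KG2 (m q p N : ℝ) : ℝ :=
  |p/2| * (|p/2-1| * (Kpsi1 N q * Kpsi1 N q) + Kpsi2 N q
    + Kpsi1 N q * ((m-2) * (Kf1 N q * 2)))
  + |p/2| * (Kpsi1 N q * ((m-2) * (Kf1 N q * 2)))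
  + ((m-2) * ((m-2-1) * ((Kf1 N q * 2) * (Kf1 N q * 2))) + (m-2) * (Kf2 N q * 2))

include hN hq1 hq2 hm hp ht hs hs1 in
lemma G2_abs_le : |G2 m q p N t s| ≤ KG2 m q p N := by
  have hA := A_pos hN hq1 hq2 ht hs
  have hψ := psi_pos hN hq1 hq2 ht hs
  have hψ1 := psi1_abs_le' hN hq1 hq2 ht hs hs1
  have hψ2 := psi2_abs_le' hN hq1 hq2 ht hs hs1
  have hKψ1 := Kpsi1_nonneg (q := q) hN
  have hKψ2 := Kpsi2_nonneg (q := q) hN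
  have hKf1 := Kf1_nonneg (q := q) hN
  have hKf2 := Kf2_nonneg (q := q) hN
  have hff1 := ff1s_abs_le hN hq1 hq2 hm hp ht hs hs1
  have hff2 := ff2s_abs_le hN hq1 hq2 hm hp ht hs hs1
  have leafψ : ∀ e : ℝ, |psi N q t s ^ e| ≤ psi N q t s ^ e :=
    fun e => le_of_eq (abs_of_nonneg (Real.rpow_nonneg hψ.le e))
  have leafA : ∀ e : ℝ, |(fN N q t * s) ^ e| ≤ (fN N q t * s) ^ e :=
    fun e => le_of_eq (abs_of_nonneg (Real.rpow_nonneg hA.le e))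
  have hm2 : (0:ℝ) ≤ m - 2 := by linarith
  have hm3 : (0:ℝ) ≤ m - 2 - 1 := by linarith
  -- term Ta
  have bTa : |(p/2-1) * psi N q t s ^ (p/2-1-1) * psi1 N q t s * psi1 N q t s
      * (fN N q t * s) ^ (m-2)| ≤ |p/2-1| * (Kpsi1 N q * Kpsi1 N q) := by
    have h := mul_bound (mul_bound (mul_bound (mul_bound (le_refl |p/2-1|)
      (leafψ (p/2-1-1))) hψ1) hψ1) (leafA (m-2))
    refine le_trans h ?_
    calc |p/2-1| * psi N q t s ^ (p/2-1-1) * (Kpsi1 N q * psi N q t s ^ ((1:ℝ)/2))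
          * (Kpsi1 N q * psi N q t s ^ ((1:ℝ)/2)) * (fN N q t * s) ^ (m-2)
        = (|p/2-1| * (Kpsi1 N q * Kpsi1 N q)) *
          ((psi N q t s ^ (p/2-1-1) * psi N q t s ^ ((1:ℝ)/2) * psi N q t s ^ ((1:ℝ)/2))
            * (fN N q t * s) ^ (m-2)) := by ring
    _ = (|p/2-1| * (Kpsi1 N q * Kpsi1 N q)) *
          (psi N q t s ^ (p/2-1-1+(1:ℝ)/2+(1:ℝ)/2) * (fN N q t * s) ^ (m-2)) := by
          rw [← Real.rpow_add hψ, ← Real.rpow_add hψ]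
    _ ≤ (|p/2-1| * (Kpsi1 N q * Kpsi1 N q)) * 1 :=
          mul_le_mul_of_nonneg_left
            (psiA_le hN hq1 hq2 ht hs hs1 (by linarith) (by linarith)) (by positivity)
    _ = |p/2-1| * (Kpsi1 N q * Kpsi1 N q) := mul_one _
  -- term Tb
  have bTb : |psi N q t s ^ (p/2-1) * psi2 N q t s * (fN N q t * s) ^ (m-2)|
      ≤ Kpsi2 N q := by
    have h := mul_bound (mul_bound (leafψ (p/2-1)) hψ2) (leafA (m-2))
    refine le_trans h ?_
    calc psi N q t s ^ (p/2-1) * Kpsi2 N q * (fN N q t * s) ^ (m-2)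
        = Kpsi2 N q * (psi N q t s ^ (p/2-1) * (fN N q t * s) ^ (m-2)) := by ring
    _ ≤ Kpsi2 N q * 1 :=
          mul_le_mul_of_nonneg_left
            (psiA_le hN hq1 hq2 ht hs hs1 (by linarith) (by linarith)) hKψ2
    _ = Kpsi2 N q := mul_one _
  -- term Tc
  have bTc : |psi N q t s ^ (p/2-1) * psi1 N q t s
      * ((m-2) * (fN N q t * s) ^ (m-2-1) * (ff1 N q t * s))|
      ≤ Kpsi1 N q * ((m-2) * (Kf1 N q * 2)) := by
    have h := mul_bound (mul_bound (leafψ (p/2-1)) hψ1)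
      (mul_bound (mul_bound (le_of_eq (abs_of_nonneg hm2)) (leafA (m-2-1))) hff1)
    refine le_trans h ?_
    calc psi N q t s ^ (p/2-1) * (Kpsi1 N q * psi N q t s ^ ((1:ℝ)/2))
          * ((m-2) * (fN N q t * s) ^ (m-2-1) * (Kf1 N q * (2 * (fN N q t * s))))
        = (Kpsi1 N q * ((m-2) * (Kf1 N q * 2))) *
          ((psi N q t s ^ (p/2-1) * psi N q t s ^ ((1:ℝ)/2))
            * ((fN N q t * s) ^ (m-2-1) * (fN N q t * s) ^ (1:ℝ))) := by
          rw [Real.rpow_one]; ring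
    _ = (Kpsi1 N q * ((m-2) * (Kf1 N q * 2))) *
          (psi N q t s ^ (p/2-1+(1:ℝ)/2) * (fN N q t * s) ^ (m-2-1+1)) := by
          rw [← Real.rpow_add hψ, ← Real.rpow_add hA]
    _ ≤ (Kpsi1 N q * ((m-2) * (Kf1 N q * 2))) * 1 :=
          mul_le_mul_of_nonneg_left
            (psiA_le hN hq1 hq2 ht hs hs1 (by linarith) (by linarith)) (by positivity)
    _ = Kpsi1 N q * ((m-2) * (Kf1 N q * 2)) := mul_one _
  -- term S3
  have bX : |(m-2-1) * (fN N q t * s) ^ (m-2-1-1) * (ff1 N q t * s) * (ff1 N q t * s)|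
      ≤ ((m-2-1) * ((Kf1 N q * 2) * (Kf1 N q * 2)))
        * ((fN N q t * s) ^ (m-2-1-1+1+1)) := by
    have h := mul_bound (mul_bound (mul_bound (le_of_eq (abs_of_nonneg hm3))
      (leafA (m-2-1-1))) hff1) hff1
    refine le_trans h (le_of_eq ?_)
    calc (m-2-1) * (fN N q t * s) ^ (m-2-1-1) * (Kf1 N q * (2 * (fN N q t * s)))
          * (Kf1 N q * (2 * (fN N q t * s)))
        = ((m-2-1) * ((Kf1 N q * 2) * (Kf1 N q * 2))) *
          ((fN N q t * s) ^ (m-2-1-1) * (fN N q t * s) ^ (1:ℝ) * (fN N q t * s) ^ (1:ℝ)) := by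
          rw [Real.rpow_one]; ring
    _ = ((m-2-1) * ((Kf1 N q * 2) * (Kf1 N q * 2)))
          * ((fN N q t * s) ^ (m-2-1-1+1+1)) := by
          rw [← Real.rpow_add hA, ← Real.rpow_add hA]
  have bY : |(fN N q t * s) ^ (m-2-1) * (ff2 N q t * s)|
      ≤ (Kf2 N q * 2) * ((fN N q t * s) ^ (m-2-1+1)) := by
    have h := mul_bound (leafA (m-2-1)) hff2
    refine le_trans h (le_of_eq ?_)
    calc (fN N q t * s) ^ (m-2-1) * (Kf2 N q * (2 * (fN N q t * s)))
        = (Kf2 N q * 2) * ((fN N q t * s) ^ (m-2-1) * (fN N q t * s) ^ (1:ℝ)) := by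
          rw [Real.rpow_one]; ring
    _ = (Kf2 N q * 2) * ((fN N q t * s) ^ (m-2-1+1)) := by rw [← Real.rpow_add hA]
  have bS3 : |psi N q t s ^ (p/2) * ((m-2) * ( (m-2-1) * (fN N q t * s) ^ (m-2-1-1)
      * (ff1 N q t * s) * (ff1 N q t * s)
      + (fN N q t * s) ^ (m-2-1) * (ff2 N q t * s) ))|
      ≤ (m-2) * ((m-2-1) * ((Kf1 N q * 2) * (Kf1 N q * 2))) + (m-2) * (Kf2 N q * 2) := by
    have habs : |(m-2-1) * (fN N q t * s) ^ (m-2-1-1) * (ff1 N q t * s) * (ff1 N q t * s)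
        + (fN N q t * s) ^ (m-2-1) * (ff2 N q t * s)|
        ≤ ((m-2-1) * ((Kf1 N q * 2) * (Kf1 N q * 2))) * ((fN N q t * s) ^ (m-2-1-1+1+1))
          + (Kf2 N q * 2) * ((fN N q t * s) ^ (m-2-1+1)) :=
      le_trans (abs_add_le _ _) (add_le_add bX bY)
    have h := mul_bound (leafψ (p/2)) (mul_bound (le_of_eq (abs_of_nonneg hm2)) habs)
    refine le_trans h ?_
    calc psi N q t s ^ (p/2) * ((m-2) *
          (((m-2-1) * ((Kf1 N q * 2) * (Kf1 N q * 2))) * ((fN N q t * s) ^ (m-2-1-1+1+1))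
            + (Kf2 N q * 2) * ((fN N q t * s) ^ (m-2-1+1))))
        = ((m-2) * ((m-2-1) * ((Kf1 N q * 2) * (Kf1 N q * 2))))
            * (psi N q t s ^ (p/2) * (fN N q t * s) ^ (m-2-1-1+1+1))
          + ((m-2) * (Kf2 N q * 2))
            * (psi N q t s ^ (p/2) * (fN N q t * s) ^ (m-2-1+1)) := by ring
    _ ≤ ((m-2) * ((m-2-1) * ((Kf1 N q * 2) * (Kf1 N q * 2)))) * 1
          + ((m-2) * (Kf2 N q * 2)) * 1 := by
          refine add_le_add
            (mul_le_mul_of_nonneg_left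
              (psiA_le hN hq1 hq2 ht hs hs1 (by linarith) (by linarith)) (by positivity))
            (mul_le_mul_of_nonneg_left
              (psiA_le hN hq1 hq2 ht hs hs1 (by linarith) (by linarith)) (by positivity))
    _ = (m-2) * ((m-2-1) * ((Kf1 N q * 2) * (Kf1 N q * 2))) + (m-2) * (Kf2 N q * 2) := by
          ring
  -- assembly
  unfold G2 KG2
  have hsum : |(p/2-1) * psi N q t s ^ (p/2-1-1) * psi1 N q t s * psi1 N q t s
        * (fN N q t * s) ^ (m-2)
      + psi N q t s ^ (p/2-1) * psi2 N q t s * (fN N q t * s) ^ (m-2)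
      + psi N q t s ^ (p/2-1) * psi1 N q t s
        * ((m-2) * (fN N q t * s) ^ (m-2-1) * (ff1 N q t * s))|
      ≤ |p/2-1| * (Kpsi1 N q * Kpsi1 N q) + Kpsi2 N q
        + Kpsi1 N q * ((m-2) * (Kf1 N q * 2)) := by
    refine le_trans (abs_add_le _ _) ?_
    refine le_trans (add_le_add (abs_add_le _ _) le_rfl) ?_
    exact add_le_add (add_le_add bTa bTb) bTc
  have bS1 := mul_bound (le_refl |p/2|) hsum
  have bS2 : |(p/2) * psi N q t s ^ (p/2-1) * psi1 N q t s
      * ((m-2) * (fN N q t * s) ^ (m-2-1) * (ff1 N q t * s))|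
      ≤ |p/2| * (Kpsi1 N q * ((m-2) * (Kf1 N q * 2))) := by
    have : (p/2) * psi N q t s ^ (p/2-1) * psi1 N q t s
        * ((m-2) * (fN N q t * s) ^ (m-2-1) * (ff1 N q t * s))
        = (p/2) * (psi N q t s ^ (p/2-1) * psi1 N q t s
          * ((m-2) * (fN N q t * s) ^ (m-2-1) * (ff1 N q t * s))) := by ring
    rw [this]
    exact mul_bound (le_refl |p/2|) bTc
  refine le_trans (abs_add_le _ _) ?_
  refine le_trans (add_le_add (abs_add_le _ _) le_rfl) ?_
  exact add_le_add (add_le_add bS1 bS2) bS3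

end Bounds
lemma G_meas (m q p N t : ℝ) : Measurable (fun s => G m q p N t s) := by
  unfold G psi
  fun_prop

lemma G1_meas (m q p N t : ℝ) : Measurable (fun s => G1 m q p N t s) := by
  unfold G1 psi psi1
  fun_prop

lemma G2_meas (m q p N t : ℝ) : Measurable (fun s => G2 m q p N t s) := by
  unfold G2 psi psi1 psi2
  fun_prop


section S
variable (hN : 0 < N) (hq1 : 2 < q) (hq2 : q ≤ 3) (hm : 5 ≤ m) (hp : p = -m + q + 2)
  (ht : |t| ≤ del N) (hs : 0 < s) (hs1 : s ≤ 1)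


lemma uIoc01 : Set.uIoc (0:ℝ) 1 = Set.Ioc (0:ℝ) 1 := Set.uIoc_of_le (by norm_num)

include hN hq1 hq2 hm hp ht in
lemma G_intble : IntervalIntegrable (fun s => G m q p N t s) volume 0 1 := by
  rw [intervalIntegrable_iff, uIoc01]
  haveI : IsFiniteMeasure (volume.restrict (Set.Ioc (0:ℝ) 1)) :=
    ⟨by rw [Measure.restrict_apply_univ]; exact measure_Ioc_lt_top⟩
  refine Integrable.mono' (integrable_const (1:ℝ))
    (G_meas m q p N t).aestronglyMeasurable ?_
  filter_upwards [ae_restrict_mem measurableSet_Ioc] with s hs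
  rw [Real.norm_eq_abs, abs_of_nonneg (G_nonneg' hN hq1 hq2 ht hs.1)]
  exact G_le_one' hN hq1 hq2 hm hp ht hs.1 hs.2

include hN hq1 hq2 hm hp ht in
lemma G1_intble : IntervalIntegrable (fun s => G1 m q p N t s) volume 0 1 := by
  rw [intervalIntegrable_iff, uIoc01]
  haveI : IsFiniteMeasure (volume.restrict (Set.Ioc (0:ℝ) 1)) :=
    ⟨by rw [Measure.restrict_apply_univ]; exact measure_Ioc_lt_top⟩
  refine Integrable.mono' (integrable_const (KG1 m q p N))
    (G1_meas m q p N t).aestronglyMeasurable ?_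
  filter_upwards [ae_restrict_mem measurableSet_Ioc] with s hs
  exact G1_abs_le hN hq1 hq2 hm hp ht hs.1 hs.2

include hN hq1 hq2 hm hp in
lemma W_hasDeriv {t₀ : ℝ} (ht0 : |t₀| < del N) :
    HasDerivAt (fun t => ∫ s in (0:ℝ)..1, G m q p N t s)
      (∫ s in (0:ℝ)..1, G1 m q p N t₀ s) t₀ := by
  have hball : ∀ x ∈ ball t₀ (del N - |t₀|), |x| ≤ del N := by
    intro x hx
    rw [mem_ball, dist_eq] at hx
    have := abs_sub_abs_le_abs_sub x t₀
    linarith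
  refine (intervalIntegral.hasDerivAt_integral_of_dominated_loc_of_deriv_le
    (F := fun t s => G m q p N t s) (F' := fun t s => G1 m q p N t s)
    (bound := fun _ => KG1 m q p N)
    (ball_mem_nhds t₀ (by linarith [abs_nonneg t₀] : (0:ℝ) < del N - |t₀|))
    (Eventually.of_forall fun x => (G_meas m q p N x).aestronglyMeasurable)
    (G_intble hN hq1 hq2 hm hp ht0.le)
    (G1_meas m q p N t₀).aestronglyMeasurable ?_ intervalIntegrable_const ?_).2
  · rw [uIoc01]
    filter_upwards with s hs x hx
    exact G1_abs_le hN hq1 hq2 hm hp (hball x hx) hs.1 hs.2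
  · rw [uIoc01]
    filter_upwards with s hs x hx
    exact G_hasDeriv hN hq1 hq2 (hball x hx) hs.1

include hN hq1 hq2 hm hp in
lemma W1_hasDeriv :
    HasDerivAt (fun t => ∫ s in (0:ℝ)..1, G1 m q p N t s)
      (∫ s in (0:ℝ)..1, G2 m q p N 0 s) 0 := by
  have hd := del_pos hN
  have hball : ∀ x ∈ ball (0:ℝ) (del N), |x| ≤ del N := by
    intro x hx
    rw [mem_ball, dist_zero_right, Real.norm_eq_abs] at hx
    exact hx.le
  have h0 : |(0:ℝ)| ≤ del N := by rw [abs_zero]; exact hd.le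
  refine (intervalIntegral.hasDerivAt_integral_of_dominated_loc_of_deriv_le
    (F := fun t s => G1 m q p N t s) (F' := fun t s => G2 m q p N t s)
    (bound := fun _ => KG2 m q p N) (ball_mem_nhds 0 hd)
    (Eventually.of_forall fun x => (G1_meas m q p N x).aestronglyMeasurable)
    (G1_intble hN hq1 hq2 hm hp h0)
    (G2_meas m q p N 0).aestronglyMeasurable ?_ intervalIntegrable_const ?_).2
  · rw [uIoc01]
    filter_upwards with s hs x hx
    exact G2_abs_le hN hq1 hq2 hm hp (hball x hx) hs.1 hs.2
  · rw [uIoc01]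
    filter_upwards with s hs x hx
    exact G1_hasDeriv hN hq1 hq2 (hball x hx) hs.1

end S
-- substitution r = fN t * s
lemma subst (hf : 0 < fN N q t) :
    (∫ r in (0:ℝ)..(fN N q t), (t^2 + r^2)^(p/2) * r^(m-2))
      = fN N q t * ∫ s in (0:ℝ)..1, G m q p N t s := by
  have := intervalIntegral.smul_integral_comp_mul_left
    (f := fun r => (t^2 + r^2)^(p/2) * r^(m-2)) (a := (0:ℝ)) (b := 1) (fN N q t)
  rw [mul_zero, mul_one] at this
  rw [← this, smul_eq_mul]
  rfl

lemma rpow_two_cast (s : ℝ) : (s:ℝ)^2 = s ^ ((2:ℝ)) := by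
  rw [show ((2:ℝ)) = ((2:ℕ):ℝ) by norm_num, Real.rpow_natCast]

lemma G_zero_eq (hq1 : 2 < q) (hq2 : q ≤ 3) (hm : 5 ≤ m) (hp : p = -m + q + 2)
    (hs0 : 0 ≤ s) : G m q p N 0 s = s ^ q := by
  unfold G psi
  rw [fN_zero, one_mul]
  rcases eq_or_lt_of_le hs0 with h | h
  · rw [← h]
    rw [Real.zero_rpow (by linarith : m - 2 ≠ 0), Real.zero_rpow (by linarith : q ≠ 0)]
    ring
  · rw [show (0:ℝ)^2 + s^2 = s^((2:ℝ)) by rw [← rpow_two_cast]; ring]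
    rw [← Real.rpow_mul hs0]
    rw [← Real.rpow_add h]
    congr 1
    linarith

lemma G2_zero_eq (hq1 : 2 < q) (hq2 : q ≤ 3) (hm : 5 ≤ m) (hp : p = -m + q + 2)
    (hs0 : 0 ≤ s) :
    G2 m q p N 0 s = p * s^(q-2) + ((p + (m-2)) * ff2 N q 0) * s ^ q := by
  rcases eq_or_lt_of_le hs0 with h | h
  · rw [← h]
    simp only [G2, psi, psi1, psi2, fN_zero, ff1_zero, one_mul, zero_mul, mul_zero,
      add_zero, zero_add, show ((0:ℝ)^2 = 0) from by norm_num]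
    rw [Real.zero_rpow (by linarith : q - 2 ≠ 0), Real.zero_rpow (by linarith : q ≠ 0),
      Real.zero_rpow (by linarith : m - 2 ≠ 0)]
    ring
  · unfold G2 psi psi1 psi2
    rw [fN_zero, ff1_zero]
    simp only [one_mul, zero_mul, mul_zero, add_zero, zero_add,
      show ((0:ℝ)^2 = 0) from by norm_num]
    rw [rpow_two_cast s, ← Real.rpow_mul hs0, ← Real.rpow_mul hs0]
    have hA : s^(2*(p/2-1)) * s^(m-2) = s^(q-2) := by
      rw [← Real.rpow_add h]; congr 1; linarith
    have hB : s^(2*(p/2)) * s^(m-2-1) = s^(q-2) * s := by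
      rw [← Real.rpow_add h, show 2*(p/2) + (m-2-1) = (q-2) + 1 by linarith,
        Real.rpow_add_one h.ne']
    have hq' : s ^ q = s^(q-2) * s * s := by
      rw [← Real.rpow_add_one h.ne' (q-2), ← Real.rpow_add_one h.ne']
      congr 1; ring
    linear_combination (p/2)*(2 + 2*(s*(ff2 N q 0*s))) * hA
      + ((m-2)*(ff2 N q 0*s)) * hB - ((p+(m-2))*ff2 N q 0) * hq'

lemma W_zero_val (hq1 : 2 < q) (hq2 : q ≤ 3) (hm : 5 ≤ m) (hp : p = -m + q + 2) :
    ∫ s in (0:ℝ)..1, G m q p N 0 s = 1/(q+1) := by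
  rw [integral_congr (g := fun s => s ^ q)
    (fun x hx => G_zero_eq hq1 hq2 hm hp
      (by rw [Set.uIcc_of_le (by norm_num : (0:ℝ) ≤ 1)] at hx; exact hx.1))]
  rw [integral_rpow (Or.inl (by linarith : (-1:ℝ) < q))]
  rw [Real.one_rpow, Real.zero_rpow (by linarith : q+1 ≠ 0)]
  norm_num

lemma IG2_val (hq1 : 2 < q) (hq2 : q ≤ 3) (hm : 5 ≤ m) (hp : p = -m + q + 2) :
    ∫ s in (0:ℝ)..1, G2 m q p N 0 s
      = p/(q-1) + ((p + (m-2)) * ff2 N q 0) / (q+1) := by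
  rw [integral_congr (g := fun s => p * s^(q-2) + ((p + (m-2)) * ff2 N q 0) * s ^ q)
    (fun x hx => G2_zero_eq hq1 hq2 hm hp
      (by rw [Set.uIcc_of_le (by norm_num : (0:ℝ) ≤ 1)] at hx; exact hx.1))]
  rw [integral_add ((intervalIntegrable_rpow' (by linarith)).const_mul p)
    ((intervalIntegrable_rpow' (by linarith)).const_mul _)]
  rw [intervalIntegral.integral_const_mul, intervalIntegral.integral_const_mul]
  rw [integral_rpow (Or.inl (by linarith : (-1:ℝ) < q-2)),
    integral_rpow (Or.inl (by linarith : (-1:ℝ) < q))]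
  rw [Real.one_rpow, Real.zero_rpow (by linarith : q-2+1 ≠ 0),
    Real.zero_rpow (by linarith : q+1 ≠ 0)]
  rw [show q-2+1 = q-1 by ring]
  simp only [Real.one_rpow]
  ring

end ANaux

open ANaux Topology Filter Metric
/-- The values `A_N(0) = c_n/(n+p-1)` and `A_N''(0) = c_n (p/(n+p-3) - 2/(n+p-1))`
for the weighted parallel section function of the body of revolution `L_N`. -/
theorem AN_zero_and_secondDeriv
    (n : ℕ) (hn : 5 ≤ n) (q : ℝ) (hq₁ : 2 < q) (hq₂ : q ≤ 3)
    (p : ℝ) (hp : p = -(n : ℝ) + q + 2)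
    (N : ℝ) (hN : 0 < N) (a : ℝ) (ha : 0 < a) (haroot : 1 - a ^ 2 - N * a ^ 4 = 0) :
    AN n N q p a 0 = sphereArea (n - 1) / ((n : ℝ) + p - 1) ∧
    iteratedDeriv 2 (AN n N q p a) 0 =
      sphereArea (n - 1) * (p / ((n : ℝ) + p - 3) - 2 / ((n : ℝ) + p - 1)) := by

  set m : ℝ := (n : ℝ) with hm_def
  have hm : 5 ≤ m := by rw [hm_def]; exact_mod_cast hn
  have hp' : p = -m + q + 2 := hp
  set c : ℝ := sphereArea (n - 1) with hc
  set W : ℝ → ℝ := fun t => ∫ s in (0:ℝ)..1, G m q p N t s with hW_def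
  set W1 : ℝ → ℝ := fun t => ∫ s in (0:ℝ)..1, G1 m q p N t s with hW1_def
  have hδ0 : 0 < del N := del_pos hN
  set δ : ℝ := min (del N) a with hδ_def
  have hδ : 0 < δ := lt_min hδ0 ha
  have hfpos : ∀ t : ℝ, |t| ≤ del N → 0 < fN N q t := fun t ht => by
    linarith [fN_ge hN hq₁ hq₂ ht]
  -- AN agrees with c * (fN * W) near 0
  have hAN_eq : ∀ t : ℝ, |t| < δ → AN n N q p a t = c * (fN N q t * W t) := by
    intro t ht
    have ht1 : |t| ≤ del N := le_of_lt (lt_of_lt_of_le ht (min_le_left _ _))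
    have ht2 : |t| ≤ a := le_of_lt (lt_of_lt_of_le ht (min_le_right _ _))
    rw [AN, if_pos ht2]
    rw [show (∫ r in (0:ℝ)..(fN N q t), (t ^ 2 + r ^ 2) ^ (p / 2) * r ^ ((n : ℝ) - 2))
        = fN N q t * W t from subst (hfpos t ht1)]
  have hq1' : q + 1 ≠ 0 := by linarith
  have hq1'' : q - 1 ≠ 0 := by linarith
  constructor
  · have hW0 : W 0 = 1/(q+1) := W_zero_val hq₁ hq₂ hm hp'
    rw [hAN_eq 0 (by rwa [abs_zero]), fN_zero, hW0,
      show m + p - 1 = q + 1 by rw [hp']; ring]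
    rw [one_mul, mul_one_div]
  · -- second derivative
    have hΦder : ∀ t : ℝ, |t| < δ →
        HasDerivAt (fun t => c * (fN N q t * W t))
          (c * (ff1 N q t * W t + fN N q t * W1 t)) t := by
      intro t ht
      have ht1 : |t| ≤ del N := le_of_lt (lt_of_lt_of_le ht (min_le_left _ _))
      have ht1' : |t| < del N := lt_of_lt_of_le ht (min_le_left _ _)
      exact ((fN_hasDeriv hN ht1).mul
        (W_hasDeriv hN hq₁ hq₂ hm hp' ht1')).const_mul c
    have hΦ1der : HasDerivAt (fun t => c * (ff1 N q t * W t + fN N q t * W1 t))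
        (c * ((ff2 N q 0 * W 0 + ff1 N q 0 * W1 0)
          + (ff1 N q 0 * W1 0 + fN N q 0 * ∫ s in (0:ℝ)..1, G2 m q p N 0 s))) 0 := by
      have h0 : |(0:ℝ)| ≤ del N := by rw [abs_zero]; exact hδ0.le
      have h0' : |(0:ℝ)| < del N := by rw [abs_zero]; exact hδ0
      exact (((ff1_hasDeriv hN h0).mul (W_hasDeriv hN hq₁ hq₂ hm hp' h0')).add
        ((fN_hasDeriv hN h0).mul (W1_hasDeriv hN hq₁ hq₂ hm hp'))).const_mul c
    have hball : {t : ℝ | |t| < δ} ∈ 𝓝 (0:ℝ) := by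
      have : Metric.ball (0:ℝ) δ ∈ 𝓝 (0:ℝ) := ball_mem_nhds 0 hδ
      refine Filter.mem_of_superset this ?_
      intro x hx
      rwa [mem_ball, dist_zero_right, Real.norm_eq_abs] at hx
    have hev : AN n N q p a =ᶠ[𝓝 (0:ℝ)] fun t => c * (fN N q t * W t) :=
      Filter.eventually_of_mem hball hAN_eq
    have hev2 : deriv (fun t => c * (fN N q t * W t))
        =ᶠ[𝓝 (0:ℝ)] fun t => c * (ff1 N q t * W t + fN N q t * W1 t) :=
      Filter.eventually_of_mem hball (fun t ht => (hΦder t ht).deriv)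
    have step1 : iteratedDeriv 2 (AN n N q p a) 0 = deriv (deriv (AN n N q p a)) 0 := by
      rw [iteratedDeriv_succ, iteratedDeriv_one]
    have hW0 : W 0 = 1/(q+1) := W_zero_val hq₁ hq₂ hm hp'
    have hIG2 : (∫ s in (0:ℝ)..1, G2 m q p N 0 s)
        = p/(q-1) + ((p + (m-2)) * ff2 N q 0) / (q+1) := IG2_val hq₁ hq₂ hm hp'
    rw [step1, (hev.deriv).deriv_eq, hev2.deriv_eq, hΦ1der.deriv]
    rw [ff1_zero, fN_zero, hW0, hIG2, ff2_zero]
    rw [show m + p - 3 = q - 1 by rw [hp']; ring,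
      show m + p - 1 = q + 1 by rw [hp']; ring]
    have hpm : p + (m - 2) = q := by rw [hp']; ring
    rw [hpm]
    field_simp
    ring
end
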